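/- Let k ∈ ℕ, b > 1 real, c, c₀, …, c_{k−1} non-negative reals with 0 < c < k, and 0 < ε ≤ k − c. Define f(a) = a^k − Σ_{j=0}^{k−1} c_j a^j − b^c a^{k−c} and f*(a) = a^k − Σ_{j=0}^{k−1} c_j a^j − b^{c+ε} a^{k−c−ε}. Then the largest real root of f* is at most the largest real root of f (both have a real root, and lrr(f) ≥ b). -/
import Mathlib

open Finset

lemma helper_9 (k d : ℕ) (b : ℝ) (cj : ℕ → ℝ)
    (hb : 1 < b) (hd : 0 < d) (hdk : d ≤ k) (hcj : ∀ j, 0 ≤ cj j) :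
    ∃ x : ℝ, IsGreatest {a : ℝ | a ^ k - (∑ j ∈ Finset.range k, cj j * a ^ j) -
        b ^ d * a ^ (k - d) = 0} x ∧ b ≤ x ∧
      ∀ t : ℝ, x < t → 0 < t ^ k - (∑ j ∈ Finset.range k, cj j * t ^ j) - b ^ d * t ^ (k - d) := by
  have hk : 1 ≤ k := le_trans hd hdk
  set g : ℝ → ℝ := fun a => a ^ k - (∑ j ∈ Finset.range k, cj j * a ^ j) - b ^ d * a ^ (k - d)
    with hg
  have hcont : Continuous g := by
    apply Continuous.sub
    apply Continuous.sub
    · exact continuous_pow k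
    · exact continuous_finset_sum _ (fun j _ => (continuous_const.mul (continuous_pow j)))
    · exact continuous_const.mul (continuous_pow (k - d))
  have hgb : g b ≤ 0 := by
    have : b ^ d * b ^ (k - d) = b ^ k := by
      rw [← pow_add]; congr 1; omega
    simp only [hg, this]
    have : (0:ℝ) ≤ ∑ j ∈ Finset.range k, cj j * b ^ j :=
      Finset.sum_nonneg fun j _ => mul_nonneg (hcj j) (pow_nonneg (by linarith) j)
    linarith
  set C : ℝ := ∑ j ∈ Finset.range k, cj j with hC
  set M : ℝ := max (max 1 b) (C + b ^ d + 1) with hM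
  have hCnn : 0 ≤ C := Finset.sum_nonneg fun j _ => hcj j
  have hbd : 0 < b ^ d := pow_pos (by linarith) d
  have hMb : b ≤ M := le_trans (le_max_right 1 b) (le_max_left _ _)
  have hM1 : 1 ≤ M := le_trans (le_max_left 1 b) (le_max_left _ _)
  have hMC : C + b ^ d + 1 ≤ M := le_max_right _ _
  have hpos : ∀ a : ℝ, M ≤ a → 0 < g a := by
    intro a ha
    have ha1 : 1 ≤ a := le_trans hM1 ha
    have ha0 : 0 < a := by linarith
    have hsum : ∑ j ∈ Finset.range k, cj j * a ^ j ≤ C * a ^ (k - 1) := by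
      rw [hC, Finset.sum_mul]
      apply Finset.sum_le_sum
      intro j hj
      have hjk : j ≤ k - 1 := by have := Finset.mem_range.mp hj; omega
      exact mul_le_mul_of_nonneg_left (pow_le_pow_right₀ ha1 hjk) (hcj j)
    have hbda : b ^ d * a ^ (k - d) ≤ b ^ d * a ^ (k - 1) :=
      mul_le_mul_of_nonneg_left (pow_le_pow_right₀ ha1 (by omega)) hbd.le
    have hak : a ^ k = a ^ (k - 1) * a := by
      rw [← pow_succ]; congr 1; omega
    have hge : a ^ (k - 1) * (a - C - b ^ d) ≤ g a := by
      simp only [hg]; rw [hak]; nlinarith [pow_pos ha0 (k-1)]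
    have : (0:ℝ) < a ^ (k - 1) * (a - C - b ^ d) := by
      apply mul_pos (pow_pos ha0 (k-1))
      have : C + b ^ d + 1 ≤ a := le_trans hMC ha
      linarith
    linarith
  have hgM : 0 < g M := hpos M le_rfl
  obtain ⟨z, hz, hz0⟩ := intermediate_value_Icc hMb hcont.continuousOn
    (show (0:ℝ) ∈ Set.Icc (g b) (g M) from ⟨hgb, hgM.le⟩)
  set S : Set ℝ := {a : ℝ | g a = 0} with hS
  have hzS : z ∈ S := hz0
  have hSne : S.Nonempty := ⟨z, hzS⟩
  have hSbdd : BddAbove S := by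
    refine ⟨M, fun a ha => ?_⟩
    by_contra h
    push_neg at h
    exact absurd ha (by simpa [hS] using (hpos a h.le).ne')
  have hSclosed : IsClosed S := isClosed_eq hcont continuous_const
  have hxS : sSup S ∈ S := hSclosed.csSup_mem hSne hSbdd
  refine ⟨sSup S, ⟨hxS, fun a ha => le_csSup hSbdd ha⟩, le_trans hz.1 (le_csSup hSbdd hzS), ?_⟩
  intro t ht
  rcases lt_trichotomy (g t) 0 with hlt | heq | hgt
  · exfalso
    set M' : ℝ := max M (t + 1) with hM'
    have hgM' : 0 < g M' := hpos M' (le_max_left _ _)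
    have htM' : t ≤ M' := by have := le_max_right M (t+1); linarith
    obtain ⟨w, hw, hw0⟩ := intermediate_value_Icc htM' hcont.continuousOn
      (show (0:ℝ) ∈ Set.Icc (g t) (g M') from ⟨hlt.le, hgM'.le⟩)
    have : w ≤ sSup S := le_csSup hSbdd hw0
    have : t ≤ sSup S := le_trans hw.1 this
    linarith
  · exact absurd (le_csSup hSbdd (show t ∈ S from heq)) (not_le.mpr ht)
  · exact hgt

theorem stmt_9 (k c ε : ℕ) (b : ℝ) (cj : ℕ → ℝ)
    (hb : 1 < b) (hc : 0 < c) (hck : c < k) (hε : 0 < ε) (hεk : ε ≤ k - c)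
    (hcj : ∀ j, 0 ≤ cj j) :
    ∃ x : ℝ,
      IsGreatest {a : ℝ | a ^ k - (∑ j ∈ Finset.range k, cj j * a ^ j) -
        b ^ c * a ^ (k - c) = 0} x ∧
      b ≤ x ∧
      ∃ y : ℝ,
        IsGreatest {a : ℝ | a ^ k - (∑ j ∈ Finset.range k, cj j * a ^ j) -
          b ^ (c + ε) * a ^ (k - (c + ε)) = 0} y ∧
        y ≤ x := by
  obtain ⟨x, hx, hbx, hposx⟩ := helper_9 k c b cj hb hc hck.le hcj
  obtain ⟨y, hy, hby, -⟩ := helper_9 k (c + ε) b cj hb (by omega) (by omega) hcj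
  refine ⟨x, hx, hbx, y, hy, ?_⟩
  by_contra h
  push_neg at h
  have hyb : b ≤ y := hby
  have hy0 : y ^ k - (∑ j ∈ Finset.range k, cj j * y ^ j) - b ^ (c + ε) * y ^ (k - (c + ε)) = 0 :=
    hy.1
  have hfy : 0 < y ^ k - (∑ j ∈ Finset.range k, cj j * y ^ j) - b ^ c * y ^ (k - c) := hposx y h
  have hb0 : (0:ℝ) < b := by linarith
  have hy1 : (1:ℝ) ≤ y := by linarith
  have hcomp : b ^ (c + ε) * y ^ (k - (c + ε)) ≤ b ^ c * y ^ (k - c) := by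
    have h1 : b ^ (c + ε) = b ^ c * b ^ ε := pow_add b c ε
    have h2 : y ^ (k - c) = y ^ ε * y ^ (k - (c + ε)) := by rw [← pow_add]; congr 1; omega
    rw [h1, h2]
    have hbε : b ^ ε ≤ y ^ ε := pow_le_pow_left₀ hb0.le hby ε
    have hq : (0:ℝ) ≤ y ^ (k - (c + ε)) := pow_nonneg (by linarith) _
    have h3 : b ^ c * b ^ ε ≤ b ^ c * y ^ ε :=
      mul_le_mul_of_nonneg_left hbε (pow_pos hb0 c).le
    calc b ^ c * b ^ ε * y ^ (k - (c + ε)) ≤ b ^ c * y ^ ε * y ^ (k - (c + ε)) :=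
          mul_le_mul_of_nonneg_right h3 hq
      _ = b ^ c * (y ^ ε * y ^ (k - (c + ε))) := by ring
  linarith
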